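/- Herbrand's Theorem: Let L be a first-order language possessing at least one closed term, and let χ be a quantifier-free formula of L with free variables among x₁, …, xₙ. Then the purely existential sentence ∃x₁ … ∃xₙ χ(x₁, …, xₙ) is valid (true in every nonempty L-structure) if and only if there exist m ≥ 1 and closed terms t₁ⁱ, …, tₙⁱ for i = 1, …, m such that the sentence ⋁_{i=1}^m χ(t₁ⁱ, …, tₙⁱ) is valid. -/

import Mathlib

universe u v w

open FirstOrder

namespace HerbrandAux

open FirstOrder Language

variable {L : FirstOrder.Language.{u, v}} {α : Type*}

/-- The list of function symbols occurring in a term. -/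
def tFuns : L.Term α → List (Σ k, L.Functions k)
  | .var _ => []
  | .func f ts => ⟨_, f⟩ :: (List.finRange _).flatMap fun i => tFuns (ts i)

/-- The list of function symbols occurring in a bounded formula. -/
def fFuns : ∀ {k : ℕ}, L.BoundedFormula α k → List (Σ k, L.Functions k)
  | _, .falsum => []
  | _, .equal t₁ t₂ => tFuns t₁ ++ tFuns t₂
  | _, .rel _ ts => (List.finRange _).flatMap fun i => tFuns (ts i)
  | _, .imp φ ψ => fFuns φ ++ fFuns ψ
  | _, .all φ => fFuns φ

lemma mem_tFuns_of_mem_listEncode :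
    ∀ (t : L.Term α) (s : Σ k, L.Functions k), Sum.inr s ∈ t.listEncode → s ∈ tFuns t := by
  intro t
  induction t with
  | var a => intro s hs; simp [Term.listEncode] at hs
  | func f ts ih =>
    intro s hs
    simp only [Term.listEncode, List.mem_cons, Sum.inr.injEq, List.mem_flatMap,
      List.mem_finRange, true_and] at hs
    rcases hs with rfl | ⟨i, hi⟩
    · simp [tFuns]
    · simp only [tFuns, List.mem_cons, List.mem_flatMap, List.mem_finRange, true_and]
      exact Or.inr ⟨i, ih i s hi⟩

lemma map_eq_map_inj {A : Type*} {B : Type*} {f : A → B} : ∀ {l₁ l₂ : List A},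
    (∀ a ∈ l₁, ∀ b ∈ l₂, f a = f b → a = b) → l₁.map f = l₂.map f → l₁ = l₂
  | [], [], _, _ => rfl
  | [], _ :: _, _, h => by simp at h
  | _ :: _, [], _, h => by simp at h
  | a :: l₁, b :: l₂, hinj, h => by
    simp only [List.map_cons, List.cons.injEq] at h
    obtain ⟨h1, h2⟩ := h
    obtain rfl := hinj a (.head _) b (.head _) h1
    rw [map_eq_map_inj (fun x hx y hy => hinj x (.tail _ hx) y (.tail _ hy)) h2]

lemma countable_restricted (Fl : List (Σ k, L.Functions k)) :
    Countable {t : L.Term Empty // ∀ s ∈ tFuns t, s ∈ Fl} := by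
  classical
  haveI : Countable {s : Σ k, L.Functions k // s ∈ Fl} := by
    have : {s : Σ k, L.Functions k | s ∈ Fl}.Finite := Fl.finite_toSet
    exact this.countable.to_subtype
  obtain ⟨gg, hgg⟩ := exists_injective_nat {s : Σ k, L.Functions k // s ∈ Fl}
  set G : (Σ k, L.Functions k) → ℕ := fun s => if h : s ∈ Fl then gg ⟨s, h⟩ else 0 with hG
  have hGinj : ∀ s₁ ∈ Fl, ∀ s₂ ∈ Fl, G s₁ = G s₂ → s₁ = s₂ := by
    intro s₁ h₁ s₂ h₂ h
    rw [hG] at h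
    simp only [dif_pos h₁, dif_pos h₂] at h
    exact congrArg Subtype.val (hgg h)
  set E : L.Term Empty → List ℕ :=
    fun t => t.listEncode.map (Sum.elim (fun e : Empty => e.elim) G) with hE
  have hEinj : Function.Injective
      (fun t : {t : L.Term Empty // ∀ s ∈ tFuns t, s ∈ Fl} => E t.val) := by
    rintro ⟨t₁, ht₁⟩ ⟨t₂, ht₂⟩ h
    simp only [hE] at h
    have : t₁.listEncode = t₂.listEncode := by
      refine map_eq_map_inj ?_ h
      intro a ha b hb hfs
      rcases a with a | s₁
      · exact a.elim
      rcases b with b | s₂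
      · exact b.elim
      simp only [Sum.elim_inr] at hfs
      exact congrArg Sum.inr
        (hGinj s₁ (ht₁ s₁ (mem_tFuns_of_mem_listEncode t₁ s₁ ha))
          s₂ (ht₂ s₂ (mem_tFuns_of_mem_listEncode t₂ s₂ hb)) hfs)
    exact Subtype.ext (Term.listEncode_injective this)
  exact hEinj.countable

end HerbrandAux

open HerbrandAux Language in
/-- Key construction: given a structure in which every closed-term instance of `χ` fails,
produce a structure in universe `w` in which the existential fails. -/
lemma herbrand_aux {L : FirstOrder.Language.{u, v}} (t₀ : L.Term Empty) {n : ℕ}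
    (χ : L.Formula (Fin n)) (hqf : χ.IsQF) (N : Type*) [L.Structure N]
    (hN : ∀ s : Fin n → L.Term Empty, ¬ Language.Sentence.Realize N (χ.subst s)) :
    ∃ (M : Type w) (_ : L.Structure M), Nonempty M ∧ ∀ x : Fin n → M, ¬χ.Realize x := by
  classical
  set Fl : List (Σ k, L.Functions k) := tFuns t₀ ++ fFuns χ with hFl
  haveI : Countable {t : L.Term Empty // ∀ s ∈ tFuns t, s ∈ Fl} := countable_restricted Fl
  set C : Set N := Set.range
    (fun t : {t : L.Term Empty // ∀ s ∈ tFuns t, s ∈ Fl} =>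
      Term.realize (fun e : Empty => e.elim) t.val) with hC
  haveI : Countable C := (Set.countable_range _).to_subtype
  haveI : Nonempty C := ⟨⟨_, ⟨⟨t₀, fun s hs => List.mem_append_left _ hs⟩, rfl⟩⟩⟩
  obtain ⟨g0, hg0⟩ := exists_surjective_nat C
  have hg : Function.Surjective (g0 ∘ ULift.down.{w}) := hg0.comp ULift.down_surjective
  set M : Type w := Quotient (Setoid.ker (g0 ∘ ULift.down.{w})) with hM
  set e : M ≃ C := Setoid.quotientKerEquivOfSurjective _ hg with he
  have hCf : ∀ (k : ℕ) (f : L.Functions k), (⟨k, f⟩ : Σ k, L.Functions k) ∈ Fl →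
      ∀ v : Fin k → C, Structure.funMap f (fun i => (v i : N)) ∈ C := by
    intro k f hf v
    choose r hr using fun i => (v i).2
    refine ⟨⟨Term.func f fun i => (r i).val, ?_⟩, ?_⟩
    · intro s hs
      simp only [tFuns, List.mem_cons, List.mem_flatMap, List.mem_finRange, true_and] at hs
      rcases hs with rfl | ⟨i, hi⟩
      · exact hf
      · exact (r i).2 s hi
    · simp only [Term.realize_func]
      exact congrArg _ (funext fun i => hr i)
  letI SM : L.Structure M :=
    { funMap := fun {k} f v =>
        if h : (⟨k, f⟩ : Σ k, L.Functions k) ∈ Fl then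
          e.symm ⟨_, hCf k f h fun i => e (v i)⟩
        else e.symm (Classical.arbitrary C)
      RelMap := fun {k} R v => Structure.RelMap R fun i => (e (v i) : N) }
  set h : M → N := fun m => ((e m : C) : N) with hh
  have hinj : Function.Injective h := fun a b hab =>
    e.injective (Subtype.coe_injective hab)
  have ht : ∀ (β : Type) (t : L.Term β), (∀ s ∈ tFuns t, s ∈ Fl) → ∀ x : β → M,
      Term.realize (fun b => h (x b)) t = h (Term.realize x t) := by
    intro β t
    induction t with
    | var a => intro _ x; rfl
    | func f ts ih =>
      intro hsub x
      have hf : (⟨_, f⟩ : Σ k, L.Functions k) ∈ Fl := hsub _ (by simp [tFuns])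
      simp only [Term.realize_func]
      have hfm : (Structure.funMap f (fun i => Term.realize x (ts i)) : M)
          = e.symm ⟨_, hCf _ f hf fun i => e (Term.realize x (ts i))⟩ := dif_pos hf
      have hesymm : ∀ X : C, h (e.symm X) = (X : N) :=
        fun X => congrArg Subtype.val (e.apply_symm_apply X)
      rw [hfm, hesymm]
      show Structure.funMap f (fun i => Term.realize (fun b => h (x b)) (ts i))
          = Structure.funMap f fun i => h (Term.realize x (ts i))
      exact congrArg _ (funext fun i => ih i (fun s hs => hsub s
        (by simp only [tFuns, List.mem_cons, List.mem_flatMap, List.mem_finRange, true_and];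
            exact Or.inr ⟨i, hs⟩)) x)
  have hform : ∀ φ : L.BoundedFormula (Fin n) 0, φ.IsQF →
      (∀ s ∈ fFuns φ, s ∈ Fl) → ∀ (x : Fin n → M) (xs : Fin 0 → M),
      (φ.Realize x xs ↔ φ.Realize (fun a => h (x a)) (fun i => h (xs i))) := by
    intro φ hφ
    induction hφ with
    | falsum => exact fun _ _ _ => Iff.rfl
    | of_isAtomic ha =>
      cases ha with
      | equal t₁ t₂ =>
        intro hsub x xs
        have hsum : (Sum.elim (fun a => h (x a)) (fun i => h (xs i)) : Fin n ⊕ Fin 0 → N)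
            = fun y => h (Sum.elim x xs y) := by
          funext y; rcases y with a | i <;> rfl
        simp only [BoundedFormula.realize_bdEqual, hsum]
        rw [ht _ t₁ (fun s hs => hsub s (by
              simp only [fFuns, Term.bdEqual, List.mem_append]; exact Or.inl hs))
            (Sum.elim x xs),
          ht _ t₂ (fun s hs => hsub s (by
              simp only [fFuns, Term.bdEqual, List.mem_append]; exact Or.inr hs))
            (Sum.elim x xs)]
        exact hinj.eq_iff.symm
      | rel R ts =>
        intro hsub x xs
        have hsum : (Sum.elim (fun a => h (x a)) (fun i => h (xs i)) : Fin n ⊕ Fin 0 → N)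
            = fun y => h (Sum.elim x xs y) := by
          funext y; rcases y with a | i <;> rfl
        simp only [BoundedFormula.realize_rel, hsum]
        have harg : (fun i => Term.realize (fun y => h (Sum.elim x xs y)) (ts i))
            = fun i => h (Term.realize (Sum.elim x xs) (ts i)) := by
          funext i
          exact ht _ (ts i) (fun s hs => hsub s (by
            simp only [fFuns, Relations.boundedFormula, List.mem_flatMap, List.mem_finRange,
              true_and]
            exact ⟨i, hs⟩)) (Sum.elim x xs)
        rw [harg]
        exact Iff.rfl
    | imp h₁ h₂ ih₁ ih₂ =>
      intro hsub x xs
      simp only [BoundedFormula.realize_imp]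
      rw [ih₁ (fun s hs => hsub s (by
            simp only [fFuns, List.mem_append]; exact Or.inl hs)) x xs,
        ih₂ (fun s hs => hsub s (by
            simp only [fFuns, List.mem_append]; exact Or.inr hs)) x xs]
  refine ⟨M, SM, ⟨e.symm (Classical.arbitrary C)⟩, ?_⟩
  intro x hx
  have hx' := (hform χ hqf (fun s hs => List.mem_append_right _ hs) x _).1 hx
  choose r hr using fun j => (e (x j)).2
  apply hN fun j => (r j).val
  simp only [Sentence.Realize, Formula.Realize, BoundedFormula.realize_subst]
  have hrew : (fun a => Term.realize (default : Empty → N) ((r a).val)) = fun a => h (x a) := by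
    funext a
    rw [show (default : Empty → N) = fun e : Empty => e.elim from funext fun e => e.elim]
    exact hr a
  rw [hrew]
  exact Eq.mp (congrArg (Language.BoundedFormula.Realize χ fun a => h (x a))
    (Subsingleton.elim _ _)) hx'

/-- **Herbrand's Theorem.** In a language with at least one closed term, a purely
existential sentence `∃ x₁ … ∃ xₙ χ(x₁, …, xₙ)` (with `χ` quantifier-free) is valid
(true in every nonempty structure) iff there exist `m ≥ 1` and closed terms
`tⱼⁱ` (`i = 1, …, m`) such that the disjunction `⋁ᵢ χ(t₁ⁱ, …, tₙⁱ)` is valid. -/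
theorem herbrand {L : FirstOrder.Language.{u, v}} (t₀ : L.Term Empty) (n : ℕ)
    (χ : L.Formula (Fin n)) (hqf : χ.IsQF) :
    (∀ (M : Type w) (_ : L.Structure M), Nonempty M →
        Language.Sentence.Realize M
          (Language.BoundedFormula.exs
            (Language.BoundedFormula.relabel (Sum.inr : Fin n → Empty ⊕ Fin n) χ))) ↔
    (∃ m : ℕ, 0 < m ∧ ∃ t : Fin m → Fin n → L.Term Empty,
      ∀ (M : Type w) (_ : L.Structure M), Nonempty M →
        Language.Sentence.Realize M
          (Language.BoundedFormula.iSup (fun i : Fin m => χ.subst (t i)))) := by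
  classical
  constructor
  · intro hvalid
    by_cases hsat : Language.Theory.IsSatisfiable
        (Set.range fun s : Fin n → L.Term Empty => Language.Formula.not (χ.subst s))
    · exfalso
      obtain ⟨NM⟩ := hsat
      have hN : ∀ s : Fin n → L.Term Empty, ¬ Language.Sentence.Realize NM (χ.subst s) := by
        intro s
        have hmem : Language.Formula.not (χ.subst s) ∈
            (Set.range fun s : Fin n → L.Term Empty => Language.Formula.not (χ.subst s)) :=
          ⟨s, rfl⟩
        have := Language.Theory.realize_sentence_of_mem
          (M := NM) (Set.range fun s : Fin n → L.Term Empty =>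
            Language.Formula.not (χ.subst s)) hmem
        exact (Language.Sentence.realize_not _).1 this
      obtain ⟨M, SM, hne, hM⟩ := herbrand_aux.{u, v, w} t₀ χ hqf NM hN
      have hre := hvalid M SM hne
      rw [Language.Sentence.Realize] at hre
      rw [Language.BoundedFormula.realize_exs] at hre
      obtain ⟨xs, hxs⟩ := hre
      rw [Language.Formula.realize_relabel_sumInr] at hxs
      exact hM _ hxs
    · rw [Language.Theory.isSatisfiable_iff_isFinitelySatisfiable,
        Language.Theory.IsFinitelySatisfiable] at hsat
      push_neg at hsat
      obtain ⟨T0, hT0sub, hT0⟩ := hsat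
      have hrep : ∀ φ ∈ T0, ∃ s : Fin n → L.Term Empty,
          Language.Formula.not (χ.subst s) = φ := fun φ hφ => hT0sub hφ
      haveI : Nonempty (Fin n → L.Term Empty) := ⟨fun _ => t₀⟩
      choose! rep hrep using hrep
      set lst := T0.toList with hlst
      refine ⟨lst.length + 1, Nat.succ_pos _,
        fun i => if h : (i : ℕ) < lst.length then rep lst[(i : ℕ)] else fun _ => t₀, ?_⟩
      intro M SM hne
      by_contra hcon
      apply hT0
      have hcon' : ∀ s : Fin n → L.Term Empty, ∀ i : Fin (lst.length + 1),
          ((if h : (i : ℕ) < lst.length then rep lst[(i : ℕ)] else fun _ => t₀) = s) →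
          ¬ Language.Sentence.Realize M (χ.subst s) := by
        intro s i hi hs
        apply hcon
        rw [Language.Sentence.Realize, Language.Formula.Realize,
          Language.BoundedFormula.realize_iSup]
        refine ⟨i, ?_⟩
        show (Language.BoundedFormula.subst χ
          (if h : (i : ℕ) < lst.length then rep lst[(i : ℕ)] else fun _ => t₀)).Realize
          default default
        rw [hi]
        exact hs
      haveI : M ⊨ (T0 : L.Theory) := by
        refine ⟨fun φ hφ => ?_⟩
        have hφ' : φ ∈ T0 := by exact_mod_cast hφ
        rw [← hrep φ hφ', Language.Sentence.realize_not]
        have hmem : φ ∈ lst := Finset.mem_toList.2 hφ'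
        have hidx : lst.idxOf φ < lst.length := List.idxOf_lt_length_iff.2 hmem
        refine hcon' (rep φ) ⟨lst.idxOf φ, Nat.lt_succ_of_lt hidx⟩ ?_
        simp only [Fin.val_mk]
        rw [dif_pos hidx]
        exact congrArg rep (List.getElem_idxOf hidx)
      exact Language.Theory.Model.isSatisfiable M
  · rintro ⟨m, hm, t, hval⟩ M SM hne
    have hre := hval M SM hne
    rw [Language.Sentence.Realize, Language.Formula.Realize,
      Language.BoundedFormula.realize_iSup] at hre
    obtain ⟨i, hi⟩ := hre
    rw [Language.BoundedFormula.realize_subst] at hi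
    rw [Language.Sentence.Realize, Language.BoundedFormula.realize_exs]
    refine ⟨fun j => Language.Term.realize (default : Empty → M) (t i j), ?_⟩
    rw [Language.Formula.realize_relabel_sumInr]
    exact hi
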